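/- Let G = (V,E) be a finite connected graph and y ∈ {0,1}^E. Then y satisfies the cycle inequalities (for every cycle C of G and every e ∈ C: y_e ≤ ∑_{e'∈C∖{e}} y_{e'}) if and only if there exists a map μ : V → ℕ such that for every edge {v,w} ∈ E, y_{vw} = 0 iff μ(v) = μ(w), and such that each level set μ^{-1}(m) induces a connected subgraph of G. -/

import Mathlib

open SimpleGraph

private lemma walk_all_zero {V : Type} (G : SimpleGraph V) (y : Sym2 V → ℕ) (μ : V → ℕ)
    (hμ : ∀ v w, G.Adj v w → (y s(v, w) = 0 ↔ μ v = μ w)) :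
    ∀ {a b : V} (p : G.Walk a b), (∀ f ∈ p.edges, y f = 0) → μ a = μ b := by
  intro a b p
  induction p with
  | nil => intro _; rfl
  | @cons a c b h q ih =>
    intro h0
    have h1 : y s(a, c) = 0 := h0 s(a, c) (by simp)
    exact ((hμ _ _ h).1 h1).trans (ih fun f hf => h0 f (by simp [hf]))

private lemma walk_erase_zero {V : Type} [DecidableEq V] (G : SimpleGraph V)
    (y : Sym2 V → ℕ) (μ : V → ℕ)
    (hμ : ∀ v w, G.Adj v w → (y s(v, w) = 0 ↔ μ v = μ w)) :
    ∀ {a b : V} (p : G.Walk a b) (x z : V), s(x, z) ∈ p.edges →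
      (∀ f ∈ p.edges.erase s(x, z), y f = 0) →
      (μ a = μ x ∧ μ z = μ b) ∨ (μ a = μ z ∧ μ x = μ b) := by
  intro a b p
  induction p with
  | nil => intro x z hx; simp at hx
  | @cons a c b h q ih =>
    intro x z hx h0
    by_cases he : s(a, c) = s(x, z)
    · have herase : (Walk.cons h q).edges.erase s(x, z) = q.edges := by
        simp [Walk.edges_cons, List.erase_cons, he]
      rw [herase] at h0
      have hcb : μ c = μ b := walk_all_zero G y μ hμ q h0
      rw [Sym2.eq_iff] at he
      rcases he with ⟨rfl, rfl⟩ | ⟨rfl, rfl⟩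
      · exact Or.inl ⟨rfl, hcb⟩
      · exact Or.inr ⟨rfl, hcb⟩
    · have herase : (Walk.cons h q).edges.erase s(x, z)
          = s(a, c) :: q.edges.erase s(x, z) := by
        simp [Walk.edges_cons, List.erase_cons, he]
      rw [herase] at h0
      have hac : μ a = μ c := (hμ _ _ h).1 (h0 _ (by simp))
      have hx' : s(x, z) ∈ q.edges := by
        rcases (by simpa using hx :
            (x = a ∧ z = c ∨ x = c ∧ z = a) ∨ s(x, z) ∈ q.edges) with (⟨rfl, rfl⟩ | ⟨rfl, rfl⟩) | h'
        · exact absurd rfl he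
        · exact absurd Sym2.eq_swap he
        · exact h'
      rcases ih x z hx' (fun f hf => h0 f (by simp [hf])) with ⟨h1, h2⟩ | ⟨h1, h2⟩
      · exact Or.inl ⟨hac.trans h1, h2⟩
      · exact Or.inr ⟨hac.trans h1, h2⟩

/-- a 01-vector `y` on the edges of a finite connected graph `G`
satisfies all cycle inequalities iff it is the characteristic vector of a multicut,
i.e. iff there is `μ : V → ℕ` with connected level sets such that for every edge
`{v,w}`, `y_{vw} = 0` iff `μ v = μ w`. -/
theorem stmt2 (V : Type) [Fintype V] [DecidableEq V] (G : SimpleGraph V)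
    (hG : G.Connected) (y : Sym2 V → ℕ) (hy01 : ∀ e, y e = 0 ∨ y e = 1) :
    (∀ (u : V) (c : G.Walk u u), c.IsCycle →
        ∀ e ∈ c.edges, y e ≤ ((c.edges.erase e).map y).sum)
    ↔ ∃ μ : V → ℕ,
        (∀ v w, G.Adj v w → (y s(v, w) = 0 ↔ μ v = μ w)) ∧
        (∀ m ∈ Set.range μ, (G.induce {v | μ v = m}).Connected) := by
  classical
  constructor
  · intro hcyc
    -- the graph of y = 0 edges
    set H : SimpleGraph V :=
      { Adj := fun v w => G.Adj v w ∧ y s(v, w) = 0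
        symm := by
          refine ⟨fun v w ⟨h1, h2⟩ => ?_⟩
          exact ⟨h1.symm, by rwa [Sym2.eq_swap] at h2⟩
        loopless := ⟨fun v hv => G.loopless.irrefl v hv.1⟩ } with hH
    have hle : H ≤ G := fun v w h => h.1
    obtain ⟨f, hf⟩ := Countable.exists_injective_nat H.ConnectedComponent
    refine ⟨fun v => f (H.connectedComponentMk v), ?_, ?_⟩
    · intro v w hvw
      constructor
      · intro h0
        exact congrArg f (SimpleGraph.ConnectedComponent.eq.2 ⟨SimpleGraph.Adj.toWalk ⟨hvw, h0⟩⟩)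
      · intro hfeq
        have hreach : H.Reachable v w := SimpleGraph.ConnectedComponent.eq.1 (hf hfeq)
        by_contra hne
        have h1 : y s(v, w) = 1 := (hy01 _).resolve_left hne
        obtain ⟨p0⟩ := hreach
        have hp : (p0.toPath : H.Walk v w).IsPath := p0.toPath.2
        set pH : H.Walk v w := p0.toPath.1 with hpH
        have hHzero : ∀ f ∈ pH.edges, y f = 0 := by
          intro f hf'
          induction f using Sym2.ind with
          | _ a b => exact (pH.adj_of_mem_edges hf').2
        set pG : G.Walk v w := pH.mapLe hle with hpG
        have hedges : pG.edges = pH.edges := by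
          have hid : ⇑(Hom.ofLE hle) = id := rfl
          simp [hpG, SimpleGraph.Walk.mapLe, SimpleGraph.Walk.edges_map, hid, Sym2.map_id]
        have hGzero : ∀ f ∈ pG.edges, y f = 0 := by rw [hedges]; exact hHzero
        have hnm : s(w, v) ∉ pG.edges := by
          intro hmem
          have := hGzero _ hmem
          rw [Sym2.eq_swap] at this
          omega
        have hcyc' : (SimpleGraph.Walk.cons hvw.symm pG).IsCycle :=
          (SimpleGraph.Walk.cons_isCycle_iff pG hvw.symm).2 ⟨hp.mapLe hle, hnm⟩
        have hineq := hcyc w _ hcyc' s(w, v) (by simp)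
        have herase : (SimpleGraph.Walk.cons hvw.symm pG).edges.erase s(w, v) = pG.edges := by
          simp [SimpleGraph.Walk.edges_cons, List.erase_cons]
        rw [herase] at hineq
        have hsum : (pG.edges.map y).sum = 0 := by
          apply List.sum_eq_zero
          intro x hx
          obtain ⟨f, hf', rfl⟩ := List.mem_map.1 hx
          exact hGzero f hf'
        rw [hsum, Nat.le_zero, Sym2.eq_swap] at hineq
        exact hne hineq
    · rintro m ⟨v0, rfl⟩
      rw [SimpleGraph.connected_iff]
      refine ⟨?_, ?_⟩
      · rintro ⟨a, ha⟩ ⟨b, hb⟩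
        have hab : H.Reachable a b :=
          SimpleGraph.ConnectedComponent.eq.1 (hf (ha.trans hb.symm))
        obtain ⟨p⟩ := hab
        have key : ∀ (a b : V) (p : H.Walk a b) (ha : f (H.connectedComponentMk a)
              = f (H.connectedComponentMk v0)) (hb : f (H.connectedComponentMk b)
              = f (H.connectedComponentMk v0)),
            (G.induce {v | f (H.connectedComponentMk v)
              = f (H.connectedComponentMk v0)}).Reachable ⟨a, ha⟩ ⟨b, hb⟩ := by
          intro a b p
          induction p with
          | nil => intro ha hb; exact SimpleGraph.Reachable.refl _
          | @cons a' c b' h q ih =>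
            intro ha' hb'
            have hc' : f (H.connectedComponentMk c) = f (H.connectedComponentMk v0) := by
              have h2 : H.connectedComponentMk a' = H.connectedComponentMk c :=
                SimpleGraph.ConnectedComponent.eq.2 h.reachable
              rw [← h2]; exact ha'
            have hadj : (G.induce {v | f (H.connectedComponentMk v)
                = f (H.connectedComponentMk v0)}).Adj ⟨a', ha'⟩ ⟨c, hc'⟩ := h.1
            exact hadj.reachable.trans (ih hc' hb')
        exact key a b p ha hb
      · exact ⟨⟨v0, rfl⟩⟩
  · intro ⟨μ, hμ, _⟩ u c hc e he
    induction e using Sym2.ind with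
    | _ x z =>
      by_cases hs : ((c.edges.erase s(x, z)).map y).sum = 0
      · have hall : ∀ f ∈ c.edges.erase s(x, z), y f = 0 := by
          intro f hf
          have : y f ≤ ((c.edges.erase s(x, z)).map y).sum :=
            List.single_le_sum (fun x _ => Nat.zero_le x) _ (List.mem_map_of_mem (f := y) hf)
          omega
        rcases walk_erase_zero G y μ hμ c x z he hall with ⟨h1, h2⟩ | ⟨h1, h2⟩ <;>
        · have hxz : μ x = μ z := by omega
          have := (hμ x z (c.adj_of_mem_edges he)).2 hxz
          omega
      · have : 1 ≤ ((c.edges.erase s(x, z)).map y).sum := Nat.one_le_iff_ne_zero.2 hs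
        rcases hy01 s(x, z) with h | h <;> omega
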